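/- Let R be a commutative ring and x_1, ..., x_n a regular sequence in R with I = (x_1, ..., x_n). Then the images of x_1, ..., x_n in the I-adic completion R^∧_I = lim_k R/I^k form a regular sequence in R^∧_I. -/

import Mathlib

/-- The ideal generated by `x j` for `j < i`. -/
def prevIdeal {R : Type*} [CommRing R] {n : ℕ} (x : Fin n → R) (i : Fin n) : Ideal R :=
  Ideal.span {y | ∃ j : Fin n, j < i ∧ x j = y}

/-- `x` is a regular sequence: each `x i` is a non-zero-divisor modulo the previous ones. -/
def IsRegularSeq {R : Type*} [CommRing R] {n : ℕ} (x : Fin n → R) : Prop :=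
  ∀ i : Fin n, ∀ r : R, x i * r ∈ prevIdeal x i → r ∈ prevIdeal x i

open MvPolynomial

section Helpers
variable {R : Type*} [CommRing R] {n : ℕ}


lemma finsupp_degree_add (f g : Fin n →₀ ℕ) :
    Finsupp.degree (f + g) = Finsupp.degree f + Finsupp.degree g := by
  show (f + g).sum (fun _ e => e) = f.sum (fun _ e => e) + g.sum (fun _ e => e)
  exact Finsupp.sum_add_index' (fun _ => rfl) (fun _ _ _ => rfl)

lemma finsupp_degree_single (a : Fin n) (b : ℕ) :
    Finsupp.degree (Finsupp.single a b) = b := by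
  show (Finsupp.single a b).sum (fun _ e => e) = b
  exact Finsupp.sum_single_index rfl

lemma prod_pow_mem (x : Fin n → R) (m : Fin n →₀ ℕ) :
    (m.prod fun j e => x j ^ e) ∈ (Ideal.span (Set.range x)) ^ (Finsupp.degree m) := by
  induction m using Finsupp.induction with
  | zero => simp
  | single_add a b f haf hb ih =>
    rw [Finsupp.prod_add_index' (fun _ => pow_zero _) (fun _ _ _ => pow_add _ _ _),
      finsupp_degree_add, finsupp_degree_single, pow_add]
    refine Ideal.mul_mem_mul ?_ ih
    rw [Finsupp.prod_single_index]
    · exact Ideal.pow_mem_pow (Ideal.subset_span (Set.mem_range_self a)) b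
    · exact pow_zero _

lemma homog_degree_eq {F : MvPolynomial (Fin n) R} {d : ℕ} (hF : F.IsHomogeneous d)
    {m : Fin n →₀ ℕ} (hm : m ∈ F.support) : Finsupp.degree m = d := by
  have := hF (MvPolynomial.mem_support_iff.mp hm)
  rwa [Finsupp.degree_eq_weight_one]

lemma aeval_mem_mul_pow (x : Fin n → R) {F : MvPolynomial (Fin n) R} {d : ℕ}
    (hF : F.IsHomogeneous d) (K : Ideal R) (hc : ∀ m, F.coeff m ∈ K) :
    aeval x F ∈ K * (Ideal.span (Set.range x)) ^ d := by
  have h := congrArg (aeval x) F.as_sum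
  rw [map_sum] at h
  rw [h]
  refine Ideal.sum_mem _ fun m hm => ?_
  rw [aeval_monomial]
  have h1 : (algebraMap R R) (coeff m F) = coeff m F := rfl
  rw [h1, ← homog_degree_eq hF hm]
  exact Ideal.mul_mem_mul (hc m) (prod_pow_mem x m)

lemma aeval_mem_pow (x : Fin n → R) {F : MvPolynomial (Fin n) R} {d : ℕ}
    (hF : F.IsHomogeneous d) :
    aeval x F ∈ (Ideal.span (Set.range x)) ^ d := by
  have := aeval_mem_mul_pow x hF ⊤ (fun m => trivial)
  rwa [← Ideal.one_eq_top, one_mul] at this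

lemma exists_homog_of_mem_pow (x : Fin n → R) (d : ℕ) {r : R}
    (hr : r ∈ (Ideal.span (Set.range x)) ^ d) :
    ∃ F : MvPolynomial (Fin n) R, F.IsHomogeneous d ∧ aeval x F = r := by
  induction d generalizing r with
  | zero => exact ⟨C r, isHomogeneous_C _ _, aeval_C _ _⟩
  | succ d ih =>
    rw [pow_succ] at hr
    refine Submodule.mul_induction_on hr (fun p hp q hq => ?_) (fun a b ⟨F, hF, hFe⟩ ⟨G, hG, hGe⟩ =>
      ⟨F + G, hF.add hG, by rw [map_add, hFe, hGe]⟩)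
    obtain ⟨F, hF, hFe⟩ := ih hp
    obtain ⟨c, hc⟩ := Submodule.mem_span_range_iff_exists_fun R |>.mp hq
    refine ⟨F * ∑ j, C (c j) * X j, ?_, ?_⟩
    · exact hF.mul (IsHomogeneous.sum _ _ _ fun j _ => by
        simpa using (isHomogeneous_C (Fin n) (c j)).mul (isHomogeneous_X R j))
    · rw [map_mul, hFe]
      congr 1
      rw [map_sum, ← hc]
      simp only [map_mul, aeval_C, aeval_X, Algebra.algebraMap_self, RingHom.id_apply, smul_eq_mul]

lemma prevIdeal_castSucc (x : Fin (n+1) → R) (i : Fin n) :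
    prevIdeal (x ∘ Fin.castSucc) i = prevIdeal x i.castSucc := by
  unfold prevIdeal
  congr 1
  ext z
  constructor
  · rintro ⟨j, hj, rfl⟩
    exact ⟨j.castSucc, by simpa using hj, rfl⟩
  · rintro ⟨j, hj, rfl⟩
    obtain ⟨j', rfl⟩ := Fin.exists_castSucc_eq.mpr
      (Fin.ne_last_of_lt (lt_of_lt_of_le hj (Fin.le_last _)))
    exact ⟨j', by simpa using hj, rfl⟩

lemma head_regular (x : Fin (n+1) → R) (hreg : IsRegularSeq x) :
    IsRegularSeq (x ∘ Fin.castSucc) := by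
  intro i r h
  rw [prevIdeal_castSucc] at h ⊢
  exact hreg i.castSucc r h

lemma prevIdeal_last (x : Fin (n+1) → R) :
    prevIdeal x (Fin.last n) = Ideal.span (Set.range (x ∘ Fin.castSucc)) := by
  unfold prevIdeal
  congr 1
  ext z
  constructor
  · rintro ⟨j, hj, rfl⟩
    obtain ⟨j', rfl⟩ := Fin.exists_castSucc_eq.mpr (Fin.ne_last_of_lt hj)
    exact ⟨j', rfl⟩
  · rintro ⟨j', rfl⟩
    exact ⟨j'.castSucc, Fin.castSucc_lt_last j', rfl⟩

lemma span_range_succ (x : Fin (n+1) → R) :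
    Ideal.span (Set.range x) =
      Ideal.span (Set.range (x ∘ Fin.castSucc)) ⊔ Ideal.span {x (Fin.last n)} := by
  rw [← Ideal.span_union]
  congr 1
  ext z
  simp only [Set.mem_union, Set.mem_range, Set.mem_singleton_iff, Function.comp_apply]
  constructor
  · rintro ⟨j, rfl⟩
    by_cases hj : j = Fin.last n
    · exact Or.inr (by rw [hj])
    · obtain ⟨j', rfl⟩ := Fin.exists_castSucc_eq.mpr hj
      exact Or.inl ⟨j', rfl⟩
  · rintro (⟨j', rfl⟩ | rfl)
    · exact ⟨j'.castSucc, rfl⟩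
    · exact ⟨Fin.last n, rfl⟩

lemma pow_le_sup {I J K : Ideal R} (hIJK : I = J ⊔ K) (k : ℕ) :
    I ^ (k+1) ≤ J ^ (k+1) ⊔ K * I ^ k := by
  induction k with
  | zero => simpa [mul_one] using le_of_eq hIJK
  | succ k ih =>
    have h1 : I ^ (k+2) = I * I ^ (k+1) := by ring
    rw [h1]
    calc I * I ^ (k+1) ≤ I * (J ^ (k+1) ⊔ K * I ^ k) := Ideal.mul_mono_right ih
    _ = I * J ^ (k+1) ⊔ I * (K * I ^ k) := Ideal.mul_sup _ _ _
    _ ≤ J ^ (k+2) ⊔ K * I ^ (k+1) := by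
        refine sup_le ?_ ?_
        · rw [hIJK, Ideal.sup_mul]
          refine sup_le ?_ ?_
          · rw [show J * J ^ (k+1) = J ^ (k+2) by ring]
            exact le_sup_left
          · refine le_trans ?_ le_sup_right
            refine le_trans (Ideal.mul_mono_right ?_) le_rfl
            exact Ideal.pow_right_mono le_sup_left _
        · rw [show I * (K * I ^ k) = K * (I * I ^ k) by ring, show I * I ^ k = I ^ (k+1) by ring]
          exact le_sup_right

end Helpers

universe u

theorem quasireg (n : ℕ) : ∀ (R : Type u) [CommRing R] (x : Fin n → R),
    IsRegularSeq x → ∀ (d : ℕ) (F : MvPolynomial (Fin n) R), F.IsHomogeneous d →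
    aeval x F ∈ (Ideal.span (Set.range x)) ^ (d+1) →
    ∀ m, F.coeff m ∈ Ideal.span (Set.range x) := by
  induction n with
  | zero =>
    intro R _ x hreg d F hF hFI m
    obtain ⟨c, rfl⟩ := MvPolynomial.C_surjective (Fin 0) F
    have hm : m = 0 := Subsingleton.elim _ _
    have : aeval x (C c : MvPolynomial (Fin 0) R) = c := aeval_C _ _
    rw [hm, coeff_zero_C]
    exact Ideal.pow_le_self (Nat.succ_ne_zero d) (this ▸ hFI)
  | succ n ih =>
    intro R _ x hreg
    classical
    set L := Fin.last n with hL
    set xh : Fin n → R := x ∘ Fin.castSucc with hxh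
    set I := Ideal.span (Set.range x) with hIdef
    set J := Ideal.span (Set.range xh) with hJdef
    have hJI : J ≤ I := Ideal.span_mono (by rintro z ⟨j, rfl⟩; exact ⟨j.castSucc, rfl⟩)
    have hIJy : I = J ⊔ Ideal.span {x L} := span_range_succ x
    have hyreg : ∀ c : R, x L * c ∈ J → c ∈ J := by
      intro c hc
      have h2 := hreg L c (by rw [prevIdeal_last]; exact hc)
      rwa [prevIdeal_last] at h2
    have hhead := head_regular x hreg
    have hxLI : x L ∈ I := Ideal.subset_span (Set.mem_range_self L)
    have KL : ∀ (k : ℕ) (t : R), x L * t ∈ J ^ k → t ∈ J ^ k := by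
      intro k
      induction k with
      | zero => intro t _; simp
      | succ k ihk =>
        intro t ht
        have ht' : t ∈ J ^ k := ihk t (Ideal.pow_le_pow_right (Nat.le_succ k) ht)
        obtain ⟨A, hA, hAe⟩ := exists_homog_of_mem_pow xh k ht'
        have hE : (C (x L) * A).IsHomogeneous k := by
          simpa using (isHomogeneous_C (Fin n) (x L)).mul hA
        have hEe : aeval xh (C (x L) * A) ∈ J ^ (k+1) := by
          rw [map_mul, aeval_C, hAe]
          simpa using ht
        have hcA : ∀ m', A.coeff m' ∈ J := by
          intro m'
          have h3 := ih R xh hhead k _ hE hEe m'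
          rw [coeff_C_mul] at h3
          exact hyreg _ h3
        have h4 := aeval_mem_mul_pow xh hA J hcA
        rw [hAe, ← pow_succ'] at h4
        exact h4
    intro d
    induction d using Nat.strong_induction_on with
    | _ d ihd =>
    intro F hF hFI m
    rcases Nat.eq_zero_or_pos d with hd0 | hdpos
    · subst hd0
      by_cases hm : m ∈ F.support
      · have hm0 : m = 0 := by
          have := homog_degree_eq hF hm
          rwa [Finsupp.degree_eq_zero_iff] at this
        have hsupp : F.support = {(0 : Fin (n+1) →₀ ℕ)} := by
          apply Finset.eq_singleton_iff_unique_mem.mpr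
          refine ⟨hm0 ▸ hm, fun m' hm' => ?_⟩
          have := homog_degree_eq hF hm'
          rwa [Finsupp.degree_eq_zero_iff] at this
        have he : aeval x F = F.coeff 0 := by
          have h := congrArg (aeval x) F.as_sum
          rw [hsupp, Finset.sum_singleton, aeval_monomial] at h
          simpa using h
        rw [hm0, ← he]
        exact Ideal.pow_le_self (by omega) hFI
      · rw [MvPolynomial.notMem_support_iff.mp hm]
        exact I.zero_mem
    · obtain ⟨e, rfl⟩ : ∃ e, d = e + 1 := ⟨d - 1, by omega⟩
      set s0 := F.support.filter (fun m' => m' L = 0) with hs0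
      set s1 := F.support.filter (fun m' => ¬ (m' L = 0)) with hs1
      set Gd : MvPolynomial (Fin (n+1)) R := ∑ m' ∈ s0, monomial m' (F.coeff m') with hGdd
      set Hp : MvPolynomial (Fin (n+1)) R :=
        ∑ m' ∈ s1, monomial (m' - Finsupp.single L 1) (F.coeff m') with hHpd
      have hdec : F = Gd + X L * Hp := by
        conv_lhs => rw [F.as_sum]
        rw [← Finset.sum_filter_add_sum_filter_not F.support (fun m' => m' L = 0)]
        congr 1
        rw [hHpd, Finset.mul_sum]
        refine Finset.sum_congr rfl (fun m' hm' => ?_)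
        have hne : ¬ (m' L = 0) := (Finset.mem_filter.mp hm').2
        have hle : Finsupp.single L 1 ≤ m' := by
          rw [Finsupp.single_le_iff]
          omega
        have hX : (X L : MvPolynomial (Fin (n+1)) R) = monomial (Finsupp.single L 1) 1 := rfl
        rw [hX, monomial_mul, one_mul, add_tsub_cancel_of_le hle]
      have hGdh : Gd.IsHomogeneous (e+1) := IsHomogeneous.sum _ _ _ (fun m' hm' =>
        isHomogeneous_monomial _ (homog_degree_eq hF (Finset.mem_filter.mp hm').1))
      have hHph : Hp.IsHomogeneous e := IsHomogeneous.sum _ _ _ (fun m' hm' => by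
        apply isHomogeneous_monomial
        have h1 := homog_degree_eq hF (Finset.mem_filter.mp hm').1
        have h2 : ¬ (m' L = 0) := (Finset.mem_filter.mp hm').2
        have hle : Finsupp.single L 1 ≤ m' := by rw [Finsupp.single_le_iff]; omega
        have h3 := finsupp_degree_add (m' - Finsupp.single L 1) (Finsupp.single L 1)
        rw [tsub_add_cancel_of_le hle, finsupp_degree_single] at h3
        omega)
      have hGsupp : Gd.support ⊆ s0 := by
        intro m' hm'
        have h1 := MvPolynomial.support_sum hm'
        obtain ⟨m'', hm''s, hmem⟩ := Finset.mem_biUnion.mp h1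
        have h2 := support_monomial_subset hmem
        rwa [Finset.mem_singleton.mp h2]
      obtain ⟨G0, hG0⟩ : ∃ G0 : MvPolynomial (Fin n) R, rename Fin.castSucc G0 = Gd := by
        apply exists_rename_eq_of_vars_subset_range Gd Fin.castSucc (Fin.castSucc_injective n)
        intro j hj
        obtain ⟨m', hm', hjm'⟩ := (mem_vars j).mp hj
        have hm's0 : m' ∈ s0 := hGsupp hm'
        have hm'L : m' L = 0 := (Finset.mem_filter.mp hm's0).2
        have hjL : j ≠ L := by
          intro h
          rw [h] at hjm'
          exact (Finsupp.mem_support_iff.mp hjm') hm'L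
        obtain ⟨j', rfl⟩ := Fin.exists_castSucc_eq.mpr hjL
        exact Set.mem_range_self j'
      have hG0h : G0.IsHomogeneous (e+1) :=
        (IsHomogeneous.rename_isHomogeneous_iff (Fin.castSucc_injective n)).mp (hG0 ▸ hGdh)
      have heval : aeval x F = aeval xh G0 + x L * aeval x Hp := by
        conv_lhs => rw [hdec]
        rw [map_add, map_mul, aeval_X, ← hG0, aeval_rename]
      have hsplit := (pow_le_sup hIJy (e+1)) hFI
      obtain ⟨j0, hj0, b0, hb0, hsum⟩ := Submodule.mem_sup.mp hsplit
      obtain ⟨uu, hu, hub⟩ := Ideal.mem_span_singleton_mul.mp hb0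
      have hyt : x L * (uu - aeval x Hp) = aeval xh G0 - j0 := by
        linear_combination hub + hsum + heval
      have hytJ : x L * (uu - aeval x Hp) ∈ J ^ (e+1) := by
        rw [hyt]
        exact sub_mem (aeval_mem_pow xh hG0h) (Ideal.pow_le_pow_right (Nat.le_succ _) hj0)
      have htJ := KL (e+1) _ hytJ
      have hHpI : aeval x Hp ∈ I ^ (e+1) := by
        have h5 : aeval x Hp = uu - (uu - aeval x Hp) := by ring
        rw [h5]
        exact sub_mem hu (Ideal.pow_right_mono hJI _ htJ)
      have hHpc : ∀ m', Hp.coeff m' ∈ I := fun m' => ihd e (Nat.lt_succ_self e) Hp hHph hHpI m'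
      obtain ⟨W, hWh, hWe⟩ := exists_homog_of_mem_pow xh (e+1) htJ
      have hEh : (G0 - C (x L) * W).IsHomogeneous (e+1) :=
        hG0h.sub (by simpa using (isHomogeneous_C _ (x L)).mul hWh)
      have hEe : aeval xh (G0 - C (x L) * W) ∈ J ^ (e+2) := by
        rw [map_sub, map_mul, aeval_C, hWe]
        have h6 : aeval xh G0 - (algebraMap R R) (x L) * (uu - aeval x Hp) = j0 := by
          have h7 : (algebraMap R R) (x L) = x L := rfl
          rw [h7]
          linear_combination -hyt
        rw [h6]
        exact hj0
      have hEc := ih R xh hhead (e+1) _ hEh hEe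
      have hG0c : ∀ m', G0.coeff m' ∈ I := by
        intro m'
        have h1 := hEc m'
        rw [coeff_sub, coeff_C_mul] at h1
        have h8 : G0.coeff m' = (G0.coeff m' - x L * W.coeff m') + x L * W.coeff m' := by ring
        rw [h8]
        exact Ideal.add_mem _ (hJI h1) (Ideal.mul_mem_right _ _ hxLI)
      rw [hdec, coeff_add]
      refine Ideal.add_mem _ ?_ ?_
      · rw [← hG0]
        by_cases h0 : coeff m (rename Fin.castSucc G0) = 0
        · rw [h0]; exact I.zero_mem
        · obtain ⟨u', hu', hcu⟩ := coeff_rename_ne_zero _ _ _ h0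
          rw [← hu', coeff_rename_mapDomain _ (Fin.castSucc_injective n)]
          exact hG0c u'
      · rw [coeff_X_mul']
        split
        · exact hHpc _
        · exact I.zero_mem

section Derived
variable {S : Type*} [CommRing S] {n : ℕ}

lemma mem_prevIdeal_rep {z : Fin n → S} {i : Fin n} {r : S} (hr : r ∈ prevIdeal z i) :
    ∃ c : Fin n → S, r = ∑ j ∈ Finset.univ.filter (· < i), z j * c j := by
  refine Submodule.span_induction ?_ ?_ ?_ ?_ hr
  · rintro z' ⟨j, hj, rfl⟩
    refine ⟨fun j' => if j' = j then 1 else 0, ?_⟩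
    rw [Finset.sum_eq_single_of_mem j (by simp [hj])]
    · simp
    · intro b _ hb
      simp [hb]
  · exact ⟨0, by simp⟩
  · rintro a b _ _ ⟨c1, rfl⟩ ⟨c2, rfl⟩
    refine ⟨c1 + c2, ?_⟩
    rw [← Finset.sum_add_distrib]
    refine Finset.sum_congr rfl fun j _ => ?_
    simp only [Pi.add_apply]
    ring
  · rintro a r' _ ⟨c, rfl⟩
    refine ⟨fun j => a * c j, ?_⟩
    rw [smul_eq_mul, Finset.mul_sum]
    exact Finset.sum_congr rfl fun j _ => by ring

lemma mem_prevIdeal_mul_rep {z : Fin n → S} {i : Fin n} {K : Ideal S} {r : S}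
    (hr : r ∈ prevIdeal z i * K) :
    ∃ c : Fin n → S, (∀ j, c j ∈ K) ∧ r = ∑ j ∈ Finset.univ.filter (· < i), z j * c j := by
  refine Submodule.mul_induction_on hr (fun p hp q hq => ?_) ?_
  · obtain ⟨c, rfl⟩ := mem_prevIdeal_rep hp
    refine ⟨fun j => c j * q, fun j => K.mul_mem_left _ hq, ?_⟩
    rw [Finset.sum_mul]
    exact Finset.sum_congr rfl fun j _ => by ring
  · rintro a b ⟨c1, hc1, rfl⟩ ⟨c2, hc2, rfl⟩
    refine ⟨c1 + c2, fun j => K.add_mem (hc1 j) (hc2 j), ?_⟩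
    rw [← Finset.sum_add_distrib]
    refine Finset.sum_congr rfl fun j _ => ?_
    simp only [Pi.add_apply]
    ring

lemma sum_rep_mem_prevIdeal {z : Fin n → S} {i : Fin n} {K : Ideal S} (c : Fin n → S)
    (hc : ∀ j, c j ∈ K) :
    (∑ j ∈ Finset.univ.filter (· < i), z j * c j) ∈ prevIdeal z i * K := by
  refine Ideal.sum_mem _ fun j hj => ?_
  exact Ideal.mul_mem_mul (Ideal.subset_span ⟨j, (Finset.mem_filter.mp hj).2, rfl⟩) (hc j)

/-- first-element colon lemma -/
lemma first_colon {m : ℕ} (y : Fin m → S) (hreg : IsRegularSeq y) (h0 : 0 < m) (k : ℕ) (r : S)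
    (hr : y ⟨0, h0⟩ * r ∈ (Ideal.span (Set.range y)) ^ (k+1)) :
    r ∈ (Ideal.span (Set.range y)) ^ k := by
  induction k with
  | zero => simp
  | succ k ihk =>
    have hr' : r ∈ (Ideal.span (Set.range y)) ^ k :=
      ihk (Ideal.pow_le_pow_right (by omega) hr)
    obtain ⟨A, hA, hAe⟩ := exists_homog_of_mem_pow y k hr'
    have hP : (X (⟨0, h0⟩ : Fin m) * A).IsHomogeneous (k+1) := by
      have h := (isHomogeneous_X S (⟨0, h0⟩ : Fin m)).mul hA
      rwa [Nat.add_comm 1 k] at h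
    have hPe : aeval y (X (⟨0, h0⟩ : Fin m) * A) ∈ (Ideal.span (Set.range y)) ^ (k+1+1) := by
      rw [map_mul, aeval_X, hAe]
      exact hr
    have hcoeff := quasireg m S y hreg (k+1) _ hP hPe
    have hcA : ∀ m', A.coeff m' ∈ Ideal.span (Set.range y) := by
      intro m'
      have := hcoeff (Finsupp.single (⟨0, h0⟩ : Fin m) 1 + m')
      rwa [coeff_X_mul] at this
    have h4 := aeval_mem_mul_pow y hA _ hcA
    rw [hAe, ← pow_succ'] at h4
    exact h4

/-- Artin-Rees type lemma for regular sequences -/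
lemma prev_inter_pow {R : Type*} [CommRing R] {n : ℕ} (x : Fin n → R) (hreg : IsRegularSeq x)
    (i : Fin n) (k : ℕ) (r : R) (hJ : r ∈ prevIdeal x i)
    (hI : r ∈ (Ideal.span (Set.range x)) ^ (k+1)) :
    ∃ c : Fin n → R, (∀ j, c j ∈ (Ideal.span (Set.range x)) ^ k) ∧
      r = ∑ j ∈ Finset.univ.filter (· < i), x j * c j := by
  classical
  set I := Ideal.span (Set.range x) with hIdef
  induction k with
  | zero =>
    obtain ⟨c, hc⟩ := mem_prevIdeal_rep hJ
    exact ⟨c, fun j => by simp, hc⟩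
  | succ k ihk =>
    obtain ⟨c, hcmem, hcrep⟩ := ihk (Ideal.pow_le_pow_right (by omega) hI)
    choose A hAh hAe using fun j => exists_homog_of_mem_pow x k (hcmem j)
    set F : MvPolynomial (Fin n) R := ∑ j ∈ Finset.univ.filter (· < i), X j * A j with hFdef
    have hFh : F.IsHomogeneous (k+1) := IsHomogeneous.sum _ _ _ fun j _ => by
      have h := (isHomogeneous_X R j).mul (hAh j)
      rwa [Nat.add_comm 1 k] at h
    have hFe : aeval x F = r := by
      rw [hFdef, map_sum, hcrep]
      refine Finset.sum_congr rfl fun j _ => ?_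
      rw [map_mul, aeval_X, hAe]
    have hFc : ∀ m', F.coeff m' ∈ I := quasireg n R x hreg (k+1) F hFh (by rw [hFe]; exact hI)
    have hpick : ∀ m' ∈ F.support, ∃ j, (j ∈ Finset.univ.filter (· < i)) ∧ m' j ≠ 0 := by
      intro m' hm'
      by_contra hcon
      push_neg at hcon
      have : F.coeff m' = 0 := by
        rw [hFdef, MvPolynomial.coeff_sum]
        refine Finset.sum_eq_zero fun j hj => ?_
        rw [coeff_X_mul']
        rw [if_neg]
        simpa using hcon j hj
      exact (MvPolynomial.mem_support_iff.mp hm') this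
    choose pick hpickmem hpickne using hpick
    -- rest of monomial: w t
    set w : {m' // m' ∈ F.support} → R := fun t =>
      F.coeff t.1 * ((t.1 - Finsupp.single (pick t.1 t.2) 1).prod fun j e => x j ^ e) with hwdef
    have hwmem : ∀ t : {m' // m' ∈ F.support}, w t ∈ I ^ (k+1) := by
      intro t
      have hle : Finsupp.single (pick t.1 t.2) 1 ≤ t.1 := by
        rw [Finsupp.single_le_iff]
        have := hpickne t.1 t.2
        omega
      have hdeg : Finsupp.degree (t.1 - Finsupp.single (pick t.1 t.2) 1) = k := by
        have h3 := finsupp_degree_add (t.1 - Finsupp.single (pick t.1 t.2) 1)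
          (Finsupp.single (pick t.1 t.2) 1)
        rw [tsub_add_cancel_of_le hle, finsupp_degree_single, homog_degree_eq hFh t.2] at h3
        omega
      have := prod_pow_mem x (t.1 - Finsupp.single (pick t.1 t.2) 1)
      rw [hdeg] at this
      rw [pow_succ']
      exact Ideal.mul_mem_mul (hFc t.1) this
    have hterm : ∀ t : {m' // m' ∈ F.support},
        F.coeff t.1 * (t.1.prod fun j e => x j ^ e) = x (pick t.1 t.2) * w t := by
      intro t
      have hle : Finsupp.single (pick t.1 t.2) 1 ≤ t.1 := by
        rw [Finsupp.single_le_iff]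
        have := hpickne t.1 t.2
        omega
      have hsplit : t.1 = Finsupp.single (pick t.1 t.2) 1 + (t.1 - Finsupp.single (pick t.1 t.2) 1) :=
        (add_tsub_cancel_of_le hle).symm
      have hprodeq : (t.1.prod fun j e => x j ^ e) =
          x (pick t.1 t.2) * ((t.1 - Finsupp.single (pick t.1 t.2) 1).prod fun j e => x j ^ e) := by
        conv_lhs => rw [hsplit]
        rw [Finsupp.prod_add_index' (fun _ => pow_zero _) (fun _ _ _ => pow_add _ _ _)]
        rw [Finsupp.prod_single_index]
        · rw [pow_one]
        · exact pow_zero _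
      rw [hprodeq, hwdef]
      ring
    have hrsum : r = ∑ t ∈ F.support.attach, x (pick t.1 t.2) * w t := by
      rw [← hFe]
      have h2 : aeval x F = ∑ m' ∈ F.support, aeval x (monomial m' (F.coeff m')) := by
        conv_lhs => rw [F.as_sum]
        rw [map_sum]
      rw [h2, ← Finset.sum_attach F.support (fun m' => aeval x (monomial m' (F.coeff m')))]
      refine Finset.sum_congr rfl fun t _ => ?_
      rw [aeval_monomial]
      have h1 : (algebraMap R R) (F.coeff t.1) = F.coeff t.1 := rfl
      rw [h1, hterm t]
    refine ⟨fun j => ∑ t ∈ F.support.attach.filter (fun t => pick t.1 t.2 = j), w t,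
      fun j => Ideal.sum_mem _ fun t _ => hwmem t, ?_⟩
    rw [hrsum, ← Finset.sum_fiberwise_of_maps_to (fun t _ => hpickmem t.1 t.2)
      (fun t => x (pick t.1 t.2) * w t)]
    refine Finset.sum_congr rfl fun j _ => ?_
    rw [Finset.mul_sum]
    refine Finset.sum_congr rfl fun t ht => ?_
    rw [(Finset.mem_filter.mp ht).2]

end Derived

section C2
variable {R : Type*} [CommRing R] {n : ℕ}

lemma colon_prev_pow (x : Fin n → R) (hreg : IsRegularSeq x) (i : Fin n) (k : ℕ) (r : R)
    (h : x i * r ∈ prevIdeal x i ⊔ (Ideal.span (Set.range x)) ^ (k+1)) :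
    r ∈ prevIdeal x i ⊔ (Ideal.span (Set.range x)) ^ k := by
  classical
  set Ji := prevIdeal x i with hJi
  set π := Ideal.Quotient.mk Ji with hπdef
  have him : (i : ℕ) < n := i.isLt
  have h0m : 0 < n - (i : ℕ) := by omega
  set emb : Fin (n - (i : ℕ)) → Fin n := fun t => ⟨(i : ℕ) + (t : ℕ), by omega⟩ with hembdef
  set y : Fin (n - (i : ℕ)) → R ⧸ Ji := fun t => π (x (emb t)) with hydef
  have hembe : ∀ t, i ≤ emb t := fun t => by
    rw [Fin.le_def]
    simp [hembdef]
  have hJle : ∀ t, Ji ≤ prevIdeal x (emb t) := by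
    intro t
    refine Ideal.span_mono ?_
    rintro z ⟨j, hj, hz⟩
    exact ⟨j, lt_of_lt_of_le hj (hembe t), hz⟩
  have subA : ∀ t, prevIdeal y t = Ideal.map π (prevIdeal x (emb t)) := by
    intro t
    unfold prevIdeal
    rw [Ideal.map_span]
    apply le_antisymm
    · rw [Ideal.span_le]
      rintro z ⟨u, hu, rfl⟩
      have : emb u < emb t := by
        rw [Fin.lt_def]
        simp only [hembdef]
        rw [Fin.lt_def] at hu
        omega
      exact Ideal.subset_span ⟨x (emb u), ⟨emb u, this, rfl⟩, rfl⟩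
    · rw [Ideal.span_le]
      rintro z ⟨w, ⟨j, hj, rfl⟩, rfl⟩
      by_cases hji : j < i
      · have hz : π (x j) = 0 := Ideal.Quotient.eq_zero_iff_mem.mpr
          (show x j ∈ prevIdeal x i from Ideal.subset_span ⟨j, hji, rfl⟩)
        rw [hz]
        exact Ideal.zero_mem _
      · push_neg at hji
        have hij : (i : ℕ) ≤ (j : ℕ) := hji
        have hlt : (j : ℕ) - (i : ℕ) < n - (i : ℕ) := by
          have := j.isLt
          omega
        set u : Fin (n - (i : ℕ)) := ⟨(j : ℕ) - (i : ℕ), hlt⟩ with hudef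
        have hembu : emb u = j := by
          apply Fin.ext
          simp only [hembdef, hudef]
          omega
        have hut : u < t := by
          rw [Fin.lt_def]
          simp only [hudef]
          rw [Fin.lt_def] at hj
          simp only [hembdef] at hj
          omega
        refine Ideal.subset_span ⟨u, hut, ?_⟩
        show π (x (emb u)) = π (x j)
        rw [hembu]
  have subB : Ideal.span (Set.range y) = Ideal.map π (Ideal.span (Set.range x)) := by
    rw [Ideal.map_span]
    apply le_antisymm
    · rw [Ideal.span_le]
      rintro z ⟨t, rfl⟩
      exact Ideal.subset_span (Set.mem_image_of_mem π (Set.mem_range_self _))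
    · rw [Ideal.span_le]
      rintro z ⟨w, ⟨j, rfl⟩, rfl⟩
      by_cases hji : j < i
      · have hz : π (x j) = 0 := Ideal.Quotient.eq_zero_iff_mem.mpr
          (show x j ∈ prevIdeal x i from Ideal.subset_span ⟨j, hji, rfl⟩)
        rw [hz]
        exact Ideal.zero_mem _
      · push_neg at hji
        have hij : (i : ℕ) ≤ (j : ℕ) := hji
        have hlt : (j : ℕ) - (i : ℕ) < n - (i : ℕ) := by
          have := j.isLt
          omega
        have hembu : emb ⟨(j : ℕ) - (i : ℕ), hlt⟩ = j := by
          apply Fin.ext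
          simp only [hembdef]
          omega
        refine Ideal.subset_span ⟨⟨(j : ℕ) - (i : ℕ), hlt⟩, ?_⟩
        show π (x (emb ⟨(j : ℕ) - (i : ℕ), hlt⟩)) = π (x j)
        rw [hembu]
  have hyreg : IsRegularSeq y := by
    intro t r' h'
    obtain ⟨r0, rfl⟩ := Ideal.Quotient.mk_surjective r'
    rw [subA t] at h' ⊢
    have h'' : π (x (emb t) * r0) ∈ Ideal.map π (prevIdeal x (emb t)) := by
      rw [map_mul]
      exact h'
    obtain ⟨w, hw, hww⟩ := (Ideal.mem_map_iff_of_surjective π Ideal.Quotient.mk_surjective).mp h''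
    have hsub : x (emb t) * r0 - w ∈ Ji := by
      rw [← Ideal.Quotient.mk_eq_mk_iff_sub_mem (I := Ji)]
      exact hww.symm
    have hmem : x (emb t) * r0 ∈ prevIdeal x (emb t) := by
      have h5 : x (emb t) * r0 = (x (emb t) * r0 - w) + w := by ring
      rw [h5]
      exact Ideal.add_mem _ (hJle t hsub) hw
    exact Ideal.mem_map_of_mem π (hreg (emb t) r0 hmem)
  -- main
  obtain ⟨a, ha, b, hb, hab⟩ := Submodule.mem_sup.mp h
  have he0 : emb ⟨0, h0m⟩ = i := by
    apply Fin.ext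
    simp [hembdef]
  have hπ : y ⟨0, h0m⟩ * π r ∈ (Ideal.span (Set.range y)) ^ (k+1) := by
    have hy0 : y ⟨0, h0m⟩ = π (x i) := by
      show π (x (emb ⟨0, h0m⟩)) = π (x i)
      rw [he0]
    rw [hy0, ← map_mul]
    have h6 : x i * r = b + a := by rw [add_comm]; exact hab.symm
    rw [h6, map_add]
    have ha0 : π a = 0 := Ideal.Quotient.eq_zero_iff_mem.mpr ha
    rw [ha0, add_zero]
    rw [subB, ← Ideal.map_pow]
    exact Ideal.mem_map_of_mem π hb
  have hfc := first_colon y hyreg h0m k (π r) hπ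
  rw [subB, ← Ideal.map_pow] at hfc
  obtain ⟨w, hw, hww⟩ := (Ideal.mem_map_iff_of_surjective π Ideal.Quotient.mk_surjective).mp hfc
  have hsub : r - w ∈ Ji := by
    rw [← Ideal.Quotient.mk_eq_mk_iff_sub_mem (I := Ji)]
    exact hww.symm
  refine Submodule.mem_sup.mpr ⟨r - w, hsub, w, hw, by ring⟩

end C2

/-- A regular sequence generating the ideal `I` remains regular in the `I`-adic
completion of `R`. -/
theorem isRegularSeq_adicCompletion
    {R : Type*} [CommRing R] {n : ℕ} (x : Fin n → R) (hreg : IsRegularSeq x)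
    (I : Ideal R) (hI : I = Ideal.span (Set.range x)) :
    IsRegularSeq (fun i => algebraMap R (AdicCompletion I R) (x i)) := by
  classical
  subst hI
  set I : Ideal R := Ideal.span (Set.range x) with hIdef
  intro i f hf
  set s : Finset (Fin n) := Finset.univ.filter (· < i) with hsdef
  set xhat : Fin n → AdicCompletion I R := fun i => algebraMap R (AdicCompletion I R) (x i)
    with hxhatdef
  have hsmul : ∀ k : ℕ, (I ^ k • ⊤ : Ideal R) = I ^ k := fun k => by ext z; simp
  -- extract representation
  obtain ⟨g, hg⟩ := mem_prevIdeal_rep hf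
  obtain ⟨Ff, hFf⟩ := AdicCompletion.mk_surjective I R f
  choose G hG using fun j => AdicCompletion.mk_surjective I R (g j)
  have hg' : xhat i * AdicCompletion.mk I R Ff =
      ∑ j ∈ s, xhat j * AdicCompletion.mk I R (G j) := by
    rw [hFf, hg]
    exact Finset.sum_congr rfl fun j _ => by rw [hG j]
  have hvalalg : ∀ (r : R) (k : ℕ),
      ((algebraMap R (AdicCompletion I R)) r).val k = Ideal.Quotient.mk (I ^ k • ⊤ : Ideal R) r :=
    fun r k => rfl
  -- componentwise relation
  have hcomp : ∀ k, x i * Ff.val k - ∑ j ∈ s, x j * (G j).val k ∈ I ^ k := by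
    intro k
    have h1 := congrArg (fun z : AdicCompletion I R => z.val k) hg'
    simp only [AdicCompletion.val_mul, AdicCompletion.val_sum_apply, AdicCompletion.mk_apply_coe,
      Submodule.mkQ_apply] at h1
    rw [hxhatdef] at h1
    simp only [hvalalg] at h1
    rw [← hsmul k]
    rw [← Ideal.Quotient.mk_eq_mk_iff_sub_mem]
    rw [map_mul, map_sum]
    simp only [map_mul]
    simp only [Ideal.Quotient.mk_eq_mk] at h1 ⊢
    exact h1
  -- Cauchy property of Ff
  have hFc : ∀ k, Ff.val (k+1) - Ff.val k ∈ I ^ k := by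
    intro k
    have h2 := (SModEq.sub_mem).mp (Ff.property (Nat.le_succ k))
    rw [hsmul k] at h2
    have h3 : Ff.val (k+1) - Ff.val k = -(Ff.val k - Ff.val (k+1)) := by ring
    rw [h3]
    exact neg_mem h2
  -- the key consequence of C2
  have hstep : ∀ k, Ff.val (k+1) ∈ prevIdeal x i ⊔ (Ideal.span (Set.range x)) ^ k := by
    intro k
    apply colon_prev_pow x hreg i k
    have h4 := hcomp (k+1)
    refine Submodule.mem_sup.mpr
      ⟨∑ j ∈ s, x j * (G j).val (k+1), ?_,
        x i * Ff.val (k+1) - ∑ j ∈ s, x j * (G j).val (k+1), h4, by ring⟩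
    refine Ideal.sum_mem _ fun j hj => ?_
    exact Ideal.mul_mem_right _ _ (Ideal.subset_span ⟨j, (Finset.mem_filter.mp hj).2, rfl⟩)
  -- invariant construction
  let Inv : ℕ → (Fin n → R) → Prop := fun k b => Ff.val (k+2) - ∑ j ∈ s, x j * b j ∈ I ^ (k+1)
  have hbase : ∃ b, Inv 0 b := by
    obtain ⟨p, hp, e, he, hpe⟩ := Submodule.mem_sup.mp (hstep 1)
    obtain ⟨a, ha⟩ := mem_prevIdeal_rep hp
    refine ⟨a, ?_⟩
    show Ff.val 2 - ∑ j ∈ s, x j * a j ∈ I ^ 1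
    rw [← ha, ← hpe]
    simpa using he
  have hstep2 : ∀ k (b : Fin n → R), Inv k b → ∃ b', Inv (k+1) b' ∧ ∀ j, b' j - b j ∈ I ^ k := by
    intro k b hb
    obtain ⟨p, hp, e, he, hpe⟩ := Submodule.mem_sup.mp (hstep (k+2))
    obtain ⟨a, ha⟩ := mem_prevIdeal_rep hp
    set δ : R := ∑ j ∈ s, x j * (a j - b j) with hδdef
    have hsplit : δ = p - ∑ j ∈ s, x j * b j := by
      rw [ha, ← Finset.sum_sub_distrib]
      exact Finset.sum_congr rfl fun j _ => by ring
    have hδJ : δ ∈ prevIdeal x i := by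
      refine Ideal.sum_mem _ fun j hj => ?_
      exact Ideal.mul_mem_right _ _ (Ideal.subset_span ⟨j, (Finset.mem_filter.mp hj).2, rfl⟩)
    have hδI : δ ∈ I ^ (k+1) := by
      have h7 : δ = ((Ff.val (k+3) - Ff.val (k+2)) - e) +
          (Ff.val (k+2) - ∑ j ∈ s, x j * b j) := by
        rw [hsplit, ← hpe]
        ring
      rw [h7]
      refine Ideal.add_mem _ (Ideal.sub_mem _ ?_ ?_) hb
      · exact Ideal.pow_le_pow_right (by omega) (hFc (k+2))
      · exact Ideal.pow_le_pow_right (by omega) he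
    obtain ⟨c, hcmem, hceq⟩ := prev_inter_pow x hreg i k δ hδJ hδI
    refine ⟨b + c, ?_, fun j => by simpa using hcmem j⟩
    show Ff.val (k+3) - ∑ j ∈ s, x j * (b + c) j ∈ I ^ (k+2)
    have hsum : ∑ j ∈ s, x j * (b + c) j =
        (∑ j ∈ s, x j * b j) + (∑ j ∈ s, x j * c j) := by
      rw [← Finset.sum_add_distrib]
      exact Finset.sum_congr rfl fun j _ => by simp only [Pi.add_apply]; ring
    have h8 : Ff.val (k+3) - ∑ j ∈ s, x j * (b + c) j = e := by
      rw [hsum, ← hceq, hsplit, ← hpe]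
      ring
    rw [h8]
    exact he
  -- build the sequence
  let D : ∀ k : ℕ, {b : Fin n → R // Inv k b} := fun k =>
    Nat.rec ⟨hbase.choose, hbase.choose_spec⟩
      (fun k p => ⟨(hstep2 k p.1 p.2).choose, (hstep2 k p.1 p.2).choose_spec.1⟩) k
  have hDdiff : ∀ k j, (D (k+1)).1 j - (D k).1 j ∈ I ^ k :=
    fun k j => (hstep2 k (D k).1 (D k).2).choose_spec.2 j
  have hDInv : ∀ k, Ff.val (k+2) - ∑ j ∈ s, x j * (D k).1 j ∈ I ^ (k+1) := fun k => (D k).2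
  -- Cauchy sequences for coefficients
  have hcauchy : ∀ j (k : ℕ), (D k).1 j ≡ (D (k+1)).1 j [SMOD (I ^ k • ⊤ : Submodule R R)] := by
    intro j k
    rw [SModEq.sub_mem]
    have : (D k).1 j - (D (k+1)).1 j = -((D (k+1)).1 j - (D k).1 j) := by ring
    rw [this, hsmul k]
    exact neg_mem (hDdiff k j)
  let Bs : Fin n → AdicCompletion.AdicCauchySequence I R := fun j =>
    AdicCompletion.AdicCauchySequence.mk I R (fun k => (D k).1 j) (hcauchy j)
  -- the final equation
  have hfeq : f = ∑ j ∈ s, xhat j * AdicCompletion.mk I R (Bs j) := by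
    rw [← hFf]
    ext k
    simp only [AdicCompletion.val_sum_apply, AdicCompletion.val_mul, AdicCompletion.mk_apply_coe,
      Submodule.mkQ_apply]
    rw [hxhatdef]
    simp only [hvalalg]
    simp only [Ideal.Quotient.mk_eq_mk]
    simp only [← map_mul]
    rw [← map_sum]
    rw [Ideal.Quotient.mk_eq_mk_iff_sub_mem]
    have hBs : ∀ j, (Bs j).val k = (D k).1 j := fun j => rfl
    have h9 : Ff.val k - ∑ j ∈ s, x j * (Bs j).val k =
        ((Ff.val k - Ff.val (k+1)) + (Ff.val (k+1) - Ff.val (k+2))) +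
          (Ff.val (k+2) - ∑ j ∈ s, x j * (D k).1 j) := by
      simp only [hBs]
      ring
    rw [hsmul k, h9]
    refine Ideal.add_mem _ (Ideal.add_mem _ ?_ ?_) ?_
    · have h10 : Ff.val k - Ff.val (k+1) = -(Ff.val (k+1) - Ff.val k) := by ring
      rw [h10]
      exact neg_mem (hFc k)
    · have h11 : Ff.val (k+1) - Ff.val (k+2) = -(Ff.val (k+2) - Ff.val (k+1)) := by ring
      rw [h11]
      exact Ideal.pow_le_pow_right (by omega) (neg_mem (hFc (k+1)))
    · exact Ideal.pow_le_pow_right (by omega) (hDInv k)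
  rw [hfeq]
  refine Ideal.sum_mem _ fun j hj => ?_
  exact Ideal.mul_mem_right _ _ (Ideal.subset_span ⟨j, (Finset.mem_filter.mp hj).2, rfl⟩)
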